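/- Let x, y be nonzero real numbers. If x·y > 0 then ∫₀^∞ (λx + y/λ)·exp(−π(λ²x² + y²/λ²)) dλ/λ = sign(x)·exp(−2πxy); if x·y < 0 then the integral equals 0. -/

import Mathlib

open Real MeasureTheory

lemma stmt10_aux_pos (x y : ℝ) (hx : 0 < x) (hy : 0 < y) :
    (∫ l in Set.Ioi (0 : ℝ),
        (l * x + y / l) * Real.exp (-(Real.pi * (l ^ 2 * x ^ 2 + y ^ 2 / l ^ 2))) / l)
      = Real.exp (-(2 * Real.pi * x * y)) := by
  set f : ℝ → ℝ := fun l => l * x - y / l with hfdef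
  set f' : ℝ → ℝ := fun l => x + y / l ^ 2 with hf'def
  have hderiv : ∀ l ∈ Set.Ioi (0:ℝ), HasDerivWithinAt f (f' l) (Set.Ioi 0) l := by
    intro l hl
    have hl0 : l ≠ 0 := ne_of_gt hl
    have h1 : HasDerivAt (fun l : ℝ => l * x) x l := by
      simpa using (hasDerivAt_id l).mul_const x
    have h2 : HasDerivAt (fun l : ℝ => y * l⁻¹) (y * -(l ^ 2)⁻¹) l :=
      (hasDerivAt_inv hl0).const_mul y
    have h3 := h1.sub h2
    have hfe : f = fun t : ℝ => t * x - y * t⁻¹ := by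
      funext t; simp [hfdef, div_eq_mul_inv]
    have : HasDerivAt f (f' l) l := by
      rw [hfe, hf'def]
      exact h3.congr_deriv (by beta_reduce; ring)
    exact this.hasDerivWithinAt
  have hinj : Set.InjOn f (Set.Ioi 0) := by
    apply StrictMonoOn.injOn
    intro a ha b hb hab
    have ha' : (0:ℝ) < a := ha
    have hb' : (0:ℝ) < b := hb
    have h1 : a * x < b * x := by nlinarith
    have h2 : y / b < y / a := div_lt_div_of_pos_left hy ha' hab
    simp only [hfdef]
    linarith
  have himg : f '' Set.Ioi 0 = Set.univ := by
    ext t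
    simp only [Set.mem_univ, iff_true, Set.mem_image, Set.mem_Ioi]
    set s := Real.sqrt (t ^ 2 + 4 * x * y) with hsdef
    have hs2 : s ^ 2 = t ^ 2 + 4 * x * y := Real.sq_sqrt (by nlinarith)
    have hsnn : 0 ≤ s := Real.sqrt_nonneg _
    have hst : -t < s := by nlinarith
    have hlpos : 0 < (t + s) / (2 * x) := div_pos (by linarith) (by linarith)
    refine ⟨(t + s) / (2 * x), hlpos, ?_⟩
    have hne : (t + s) / (2 * x) ≠ 0 := ne_of_gt hlpos
    have hts : t + s ≠ 0 := by linarith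
    simp only [hfdef]
    field_simp
    linear_combination hs2
  have key := MeasureTheory.integral_image_eq_integral_abs_deriv_smul
    measurableSet_Ioi hderiv hinj (fun t => Real.exp (-(Real.pi * t ^ 2)))
  rw [himg, Measure.restrict_univ] at key
  have gauss : (∫ t : ℝ, Real.exp (-(Real.pi * t ^ 2))) = 1 := by
    have := integral_gaussian Real.pi
    simpa [div_self (ne_of_gt Real.pi_pos)] using this
  rw [gauss] at key
  have congr1 : Set.EqOn
      (fun l => (l * x + y / l) * Real.exp (-(Real.pi * (l ^ 2 * x ^ 2 + y ^ 2 / l ^ 2))) / l)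
      (fun l => Real.exp (-(2 * Real.pi * x * y)) * (|f' l| • Real.exp (-(Real.pi * (f l) ^ 2))))
      (Set.Ioi 0) := by
    intro l hl
    have hl0 : (0:ℝ) < l := hl
    have habs : |f' l| = x + y / l ^ 2 := by
      simp only [hf'def]
      exact abs_of_pos (by positivity)
    have hlne : l ≠ 0 := ne_of_gt hl0
    have hexp : -(Real.pi * (l ^ 2 * x ^ 2 + y ^ 2 / l ^ 2))
        = -(2 * Real.pi * x * y) + -(Real.pi * (f l) ^ 2) := by
      simp only [hfdef]
      field_simp
      ring
    simp only [smul_eq_mul, habs, hexp, Real.exp_add]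
    field_simp
  rw [setIntegral_congr_fun measurableSet_Ioi congr1, integral_const_mul, ← key, mul_one]

lemma stmt10_aux_neg (x y : ℝ) (hx : x ≠ 0) (hxy : x * y < 0) :
    (∫ l in Set.Ioi (0 : ℝ),
        (l * x + y / l) * Real.exp (-(Real.pi * (l ^ 2 * x ^ 2 + y ^ 2 / l ^ 2))) / l)
      = 0 := by
  set d : ℝ := -y / x with hddef
  have hd : 0 < d := by
    rw [hddef, div_pos_iff]
    rcases lt_or_gt_of_ne hx with h | h
    · right; constructor
      · nlinarith
      · exact h
    · left; constructor
      · nlinarith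
      · exact h
  have hy' : y = -(d * x) := by
    rw [hddef]; field_simp
  set f : ℝ → ℝ := fun l => d / l with hfdef
  set f' : ℝ → ℝ := fun l => -(d / l ^ 2) with hf'def
  have hderiv : ∀ l ∈ Set.Ioi (0:ℝ), HasDerivWithinAt f (f' l) (Set.Ioi 0) l := by
    intro l hl
    have hl0 : l ≠ 0 := ne_of_gt hl
    have h2 : HasDerivAt (fun l : ℝ => d * l⁻¹) (d * -(l ^ 2)⁻¹) l :=
      (hasDerivAt_inv hl0).const_mul d
    have hfe : f = fun t : ℝ => d * t⁻¹ := by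
      funext t; simp [hfdef, div_eq_mul_inv]
    have : HasDerivAt f (f' l) l := by
      rw [hfe, hf'def]
      convert h2 using 1
      ring
    exact this.hasDerivWithinAt
  have hinj : Set.InjOn f (Set.Ioi 0) := by
    intro a ha b hb hab
    simp only [hfdef] at hab
    have ha' : (0:ℝ) < a := ha
    have hb' : (0:ℝ) < b := hb
    rw [div_eq_div_iff (ne_of_gt ha') (ne_of_gt hb')] at hab
    exact (mul_left_cancel₀ (ne_of_gt hd) hab).symm
  have himg : f '' Set.Ioi 0 = Set.Ioi 0 := by
    ext t
    simp only [Set.mem_image, Set.mem_Ioi]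
    constructor
    · rintro ⟨l, hl, rfl⟩
      exact div_pos hd hl
    · intro ht
      refine ⟨d / t, div_pos hd ht, ?_⟩
      simp only [hfdef]
      field_simp
  have key := MeasureTheory.integral_image_eq_integral_abs_deriv_smul
    measurableSet_Ioi hderiv hinj
    (fun l => (l * x + y / l) * Real.exp (-(Real.pi * (l ^ 2 * x ^ 2 + y ^ 2 / l ^ 2))) / l)
  rw [himg] at key
  have congr1 : Set.EqOn
      (fun l => |f' l| • ((f l * x + y / f l) *
        Real.exp (-(Real.pi * ((f l) ^ 2 * x ^ 2 + y ^ 2 / (f l) ^ 2))) / f l))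
      (fun l => -((l * x + y / l) * Real.exp (-(Real.pi * (l ^ 2 * x ^ 2 + y ^ 2 / l ^ 2))) / l))
      (Set.Ioi 0) := by
    intro l hl
    have hl0 : (0:ℝ) < l := hl
    have hld : (0:ℝ) < d / l := div_pos hd hl0
    have habs : |f' l| = d / l ^ 2 := by
      simp only [hf'def, abs_neg]
      exact abs_of_pos (by positivity)
    simp only [smul_eq_mul, habs, hfdef]
    have harg : (d / l) ^ 2 * x ^ 2 + y ^ 2 / (d / l) ^ 2
        = l ^ 2 * x ^ 2 + y ^ 2 / l ^ 2 := by
      rw [hy']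
      field_simp
      ring
    rw [harg, hy']
    field_simp
    ring
  rw [setIntegral_congr_fun measurableSet_Ioi congr1, integral_neg] at key
  linarith [key]

theorem stmt10 (x y : ℝ) (hx : x ≠ 0) (hy : y ≠ 0) :
    (0 < x * y →
      (∫ l in Set.Ioi (0 : ℝ),
          (l * x + y / l) * Real.exp (-(Real.pi * (l ^ 2 * x ^ 2 + y ^ 2 / l ^ 2))) / l)
        = Real.sign x * Real.exp (-(2 * Real.pi * x * y))) ∧
    (x * y < 0 →
      (∫ l in Set.Ioi (0 : ℝ),
          (l * x + y / l) * Real.exp (-(Real.pi * (l ^ 2 * x ^ 2 + y ^ 2 / l ^ 2))) / l)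
        = 0) := by
  constructor
  · intro hxy
    rcases lt_or_gt_of_ne hx with hneg | hpos
    · have hyneg : y < 0 := by nlinarith
      have h := stmt10_aux_pos (-x) (-y) (by linarith) (by linarith)
      have hpt : ∀ l : ℝ, (l * -x + -y / l) *
          Real.exp (-(Real.pi * (l ^ 2 * (-x) ^ 2 + (-y) ^ 2 / l ^ 2))) / l
          = -((l * x + y / l) * Real.exp (-(Real.pi * (l ^ 2 * x ^ 2 + y ^ 2 / l ^ 2))) / l) := by
        intro l
        rw [neg_sq, neg_sq]
        ring
      simp only [hpt] at h
      rw [integral_neg] at h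
      rw [Real.sign_of_neg hneg]
      have harg : -(2 * Real.pi * -x * -y) = -(2 * Real.pi * x * y) := by ring
      rw [harg] at h
      linarith [h]
    · have hypos : 0 < y := by nlinarith
      rw [Real.sign_of_pos hpos, one_mul]
      exact stmt10_aux_pos x y hpos hypos
  · intro hxy
    exact stmt10_aux_neg x y hx hxy
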